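/- Let X_1, …, X_n be independent random vectors in ℝ^d with |X_i| ≤ β almost surely and ∑_{i=1}^n E[X_i X_iᵀ] = n I_d (i.e. ∑_i E[X_{ij} X_{ik}] = n δ_{jk} for all j, k). Then E[ ‖ (1/n) ∑_{i=1}^n X_i X_iᵀ − I_d ‖_{HS} ] ≤ β √(d/n), where ‖·‖_{HS} denotes the Hilbert–Schmidt (Frobenius) norm of a d×d matrix, ‖A‖_{HS} = (∑_{j,k} A_{jk}²)^{1/2}. -/

import Mathlib

open MeasureTheory ProbabilityTheory

theorem stmt17 (n d : ℕ) (hn : 1 ≤ n) (hd : 1 ≤ d) (β : ℝ) (hβ : 0 < β)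
    (Ω : Type) (mΩ : MeasurableSpace Ω) (μ : Measure Ω)
    (hμ : IsProbabilityMeasure μ)
    (X : Fin n → Ω → EuclideanSpace ℝ (Fin d))
    (hXm : ∀ i, Measurable (X i))
    (hindep : iIndepFun X μ)
    (hbd : ∀ i, ∀ᵐ ω ∂μ, ‖X i ω‖ ≤ β)
    -- ∑_i E[X_{ij} X_{ik}] = n δ_{jk}
    (hcov : ∀ j k : Fin d,
      (∑ i, ∫ ω, X i ω j * X i ω k ∂μ) = n * (if j = k then 1 else 0)) :
    (∫ ω, Real.sqrt (∑ j : Fin d, ∑ k : Fin d,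
        ((n : ℝ)⁻¹ * (∑ i, X i ω j * X i ω k) - (if j = k then 1 else 0)) ^ 2) ∂μ)
      ≤ β * Real.sqrt (d / n) := by
  have hn0 : (0:ℝ) < n := by exact_mod_cast hn
  have hd0 : (0:ℝ) < d := by exact_mod_cast hd
  have hXjm : ∀ (i : Fin n) (j : Fin d), Measurable fun ω => X i ω j :=
    fun i j => (measurable_pi_apply j).comp ((WithLp.measurable_ofLp _ _).comp (hXm i))
  -- norm squared identity
  have hns : ∀ (v : EuclideanSpace ℝ (Fin d)), ∑ j, (v j)^2 = ‖v‖^2 := by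
    intro v
    rw [EuclideanSpace.norm_eq, Real.sq_sqrt (by positivity)]
    simp [sq_abs]
  have hcoord : ∀ (v : EuclideanSpace ℝ (Fin d)) (j : Fin d), |v j| ≤ ‖v‖ := by
    intro v j
    have h1 : (v j)^2 ≤ ‖v‖^2 := by
      rw [← hns]
      exact Finset.single_le_sum (f := fun l : Fin d => (v l)^2) (fun l _ => sq_nonneg _) (Finset.mem_univ j)
    calc |v j| = Real.sqrt ((v j)^2) := (Real.sqrt_sq_eq_abs _).symm
      _ ≤ Real.sqrt (‖v‖^2) := Real.sqrt_le_sqrt h1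
      _ = ‖v‖ := Real.sqrt_sq (norm_nonneg v)
  have hYb : ∀ (i : Fin n) (j k : Fin d), ∀ᵐ ω ∂μ, |X i ω j * X i ω k| ≤ β^2 := by
    intro i j k
    filter_upwards [hbd i] with ω hω
    calc |X i ω j * X i ω k| = |X i ω j| * |X i ω k| := abs_mul _ _
      _ ≤ β * β :=
          mul_le_mul ((hcoord _ j).trans hω) ((hcoord _ k).trans hω)
            (abs_nonneg _) hβ.le
      _ = β^2 := (sq β).symm
  have hYm : ∀ (i : Fin n) (j k : Fin d), Measurable fun ω => X i ω j * X i ω k :=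
    fun i j k => (hXjm i j).mul (hXjm i k)
  have hYL2 : ∀ (i : Fin n) (j k : Fin d),
      MemLp (fun ω => X i ω j * X i ω k) 2 μ := by
    intro i j k
    exact MemLp.of_bound (hYm i j k).aestronglyMeasurable (β^2)
      ((hYb i j k).mono fun ω h => by simpa only [Real.norm_eq_abs] using h)
  have hYint : ∀ (i : Fin n) (j k : Fin d),
      Integrable (fun ω => X i ω j * X i ω k) μ :=
    fun i j k => (hYL2 i j k).integrable one_le_two
  have hY2int : ∀ (i : Fin n) (j k : Fin d),
      Integrable (fun ω => (X i ω j * X i ω k)^2) μ :=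
    fun i j k => (hYL2 i j k).integrable_sq
  -- per (j,k) key variance bound
  have key : ∀ j k : Fin d,
      ∫ ω, ((n:ℝ)⁻¹ * (∑ i, X i ω j * X i ω k) - (if j = k then 1 else 0))^2 ∂μ
        ≤ ((n:ℝ)⁻¹)^2 * ∑ i, ∫ ω, (X i ω j * X i ω k)^2 ∂μ := by
    intro j k
    set Y : Fin n → Ω → ℝ := fun i ω => X i ω j * X i ω k with hY
    set c : ℝ := (n:ℝ) * (if j = k then 1 else 0) with hc
    have hSL2 : MemLp (∑ i, Y i) 2 μ :=
      memLp_finset_sum' _ (fun i _ => hYL2 i j k)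
    have hES : μ[∑ i, Y i] = c := by
      have h1 : ∫ ω, (∑ i, Y i) ω ∂μ = ∑ i, ∫ ω, Y i ω ∂μ := by
        simp only [Finset.sum_apply]
        exact integral_finset_sum _ (fun i _ => hYint i j k)
      rw [show μ[∑ i, Y i] = ∫ ω, (∑ i, Y i) ω ∂μ from rfl, h1, hc]
      exact hcov j k
    have hpw : Set.Pairwise ↑(Finset.univ : Finset (Fin n))
        fun i i' => IndepFun (Y i) (Y i') μ := by
      intro i _ i' _ hii'
      have φm : Measurable (fun v : EuclideanSpace ℝ (Fin d) => v j * v k) :=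
        ((measurable_pi_apply j).comp (WithLp.measurable_ofLp _ _)).mul
          ((measurable_pi_apply k).comp (WithLp.measurable_ofLp _ _))
      exact (hindep.indepFun hii').comp φm φm
    have hvar : variance (∑ i, Y i) μ ≤ ∑ i, ∫ ω, (Y i ω)^2 ∂μ := by
      rw [IndepFun.variance_sum (fun i _ => hYL2 i j k) hpw]
      refine Finset.sum_le_sum fun i _ => ?_
      exact variance_le_expectation_sq (hYm i j k).aestronglyMeasurable
    have hveq : variance (∑ i, Y i) μ = ∫ ω, ((∑ i, Y i ω) - c)^2 ∂μ := by
      rw [variance_eq_integral hSL2.aemeasurable, hES]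
      refine integral_congr_ae (Filter.Eventually.of_forall fun ω => ?_)
      simp [Finset.sum_apply]
    have hrw : ∀ ω : Ω, ((n:ℝ)⁻¹ * (∑ i, Y i ω) - (if j = k then 1 else 0))^2
        = ((n:ℝ)⁻¹)^2 * ((∑ i, Y i ω) - c)^2 := by
      intro ω
      rw [hc]
      field_simp
    calc ∫ ω, ((n:ℝ)⁻¹ * (∑ i, Y i ω) - (if j = k then 1 else 0))^2 ∂μ
        = ∫ ω, ((n:ℝ)⁻¹)^2 * ((∑ i, Y i ω) - c)^2 ∂μ :=
          integral_congr_ae (Filter.Eventually.of_forall hrw)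
      _ = ((n:ℝ)⁻¹)^2 * ∫ ω, ((∑ i, Y i ω) - c)^2 ∂μ := integral_const_mul _ _
      _ = ((n:ℝ)⁻¹)^2 * variance (∑ i, Y i) μ := by rw [hveq]
      _ ≤ ((n:ℝ)⁻¹)^2 * ∑ i, ∫ ω, (Y i ω)^2 ∂μ :=
          mul_le_mul_of_nonneg_left hvar (by positivity)
  -- integrability of each summand of f
  have hgint : ∀ j k : Fin d, Integrable (fun ω =>
      ((n : ℝ)⁻¹ * (∑ i, X i ω j * X i ω k) - (if j = k then 1 else 0)) ^ 2) μ := by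
    intro j k
    have h1 : MemLp (fun ω => ∑ i, X i ω j * X i ω k) 2 μ := by
      have h := memLp_finset_sum' (μ := μ) (Finset.univ)
        (f := fun (i : Fin n) (ω : Ω) => X i ω j * X i ω k) (fun i _ => hYL2 i j k)
      exact h.ae_eq (Filter.Eventually.of_forall fun ω => by simp [Finset.sum_apply])
    exact ((h1.const_mul _).sub (memLp_const _)).integrable_sq
  -- integrability of squares of coordinates
  have hX2int : ∀ (i : Fin n) (j : Fin d), Integrable (fun ω => (X i ω j)^2) μ := by
    intro i j
    simpa [pow_two] using hYint i j j
  have htint : ∀ i : Fin n, Integrable (fun ω => ∑ j, (X i ω j)^2) μ :=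
    fun i => integrable_finset_sum _ fun j _ => hX2int i j
  have heqsq : ∀ (i : Fin n) (ω : Ω),
      (∑ j, (X i ω j)^2)^2 = ∑ j, ∑ k, (X i ω j * X i ω k)^2 := by
    intro i ω
    rw [sq, Finset.sum_mul_sum]
    simp only [mul_pow]
  have ht2int : ∀ i : Fin n, Integrable (fun ω => (∑ j, (X i ω j)^2)^2) μ := by
    intro i
    have h := integrable_finset_sum (μ := μ) Finset.univ
      (f := fun (j : Fin d) ω => ∑ k, (X i ω j * X i ω k)^2)
      (fun j _ => integrable_finset_sum _ fun k _ => hY2int i j k)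
    exact h.congr (Filter.Eventually.of_forall fun ω => (heqsq i ω).symm)
  -- bound on the expected squared norm-square
  have hbound : ∀ i : Fin n, ∫ ω, (∑ j, (X i ω j)^2)^2 ∂μ
      ≤ β^2 * ∫ ω, ∑ j, (X i ω j)^2 ∂μ := by
    intro i
    rw [← integral_const_mul]
    refine integral_mono_ae (ht2int i) ((htint i).const_mul _) ?_
    filter_upwards [hbd i] with ω hω
    have ht0 : 0 ≤ ∑ j, (X i ω j)^2 := Finset.sum_nonneg fun j _ => sq_nonneg _
    have htβ : ∑ j, (X i ω j)^2 ≤ β^2 := by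
      rw [hns]
      exact pow_le_pow_left₀ (norm_nonneg _) hω 2
    calc (∑ j, (X i ω j)^2)^2 = (∑ j, (X i ω j)^2) * (∑ j, (X i ω j)^2) := sq _
      _ ≤ β^2 * (∑ j, (X i ω j)^2) := mul_le_mul_of_nonneg_right htβ ht0
  -- the trace identity
  have htrace : ∑ i, ∫ ω, ∑ j, (X i ω j)^2 ∂μ = (d : ℝ) * n := by
    have h1 : ∀ i : Fin n, ∫ ω, ∑ j, (X i ω j)^2 ∂μ = ∑ j, ∫ ω, (X i ω j)^2 ∂μ :=
      fun i => integral_finset_sum _ fun j _ => hX2int i j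
    simp only [h1]
    rw [Finset.sum_comm]
    have h2 : ∀ j : Fin d, ∑ i, ∫ ω, (X i ω j)^2 ∂μ = (n : ℝ) := by
      intro j
      have h := hcov j j
      rw [if_pos rfl, mul_one] at h
      rw [← h]
      refine Finset.sum_congr rfl fun i _ => ?_
      congr 1
      funext ω
      rw [pow_two]
    simp only [h2, Finset.sum_const, Finset.card_univ, Fintype.card_fin, nsmul_eq_mul]
  -- main integral bound
  have f : Ω → ℝ := fun ω => 0
  set f : Ω → ℝ := fun ω => ∑ j : Fin d, ∑ k : Fin d,
      ((n : ℝ)⁻¹ * (∑ i, X i ω j * X i ω k) - (if j = k then 1 else 0)) ^ 2 with hfdef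
  have hfint : Integrable f μ :=
    integrable_finset_sum _ fun j _ => integrable_finset_sum _ fun k _ => hgint j k
  have hf0 : ∀ ω, 0 ≤ f ω :=
    fun ω => Finset.sum_nonneg fun j _ => Finset.sum_nonneg fun k _ => sq_nonneg _
  have hIf : ∫ ω, f ω ∂μ ≤ β^2 * ((d:ℝ)/n) := by
    have h1 : ∫ ω, f ω ∂μ = ∑ j, ∑ k, ∫ ω,
        ((n : ℝ)⁻¹ * (∑ i, X i ω j * X i ω k) - (if j = k then 1 else 0)) ^ 2 ∂μ := by
      rw [hfdef]
      rw [integral_finset_sum _ (fun j _ => integrable_finset_sum _ fun k _ => hgint j k)]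
      exact Finset.sum_congr rfl fun j _ => integral_finset_sum _ fun k _ => hgint j k
    have h2 : ∑ j : Fin d, ∑ k : Fin d, ∫ ω,
        ((n : ℝ)⁻¹ * (∑ i, X i ω j * X i ω k) - (if j = k then 1 else 0)) ^ 2 ∂μ
        ≤ ((n:ℝ)⁻¹)^2 * ∑ j : Fin d, ∑ k : Fin d, ∑ i, ∫ ω, (X i ω j * X i ω k)^2 ∂μ := by
      rw [Finset.mul_sum]
      refine Finset.sum_le_sum fun j _ => ?_
      rw [Finset.mul_sum]
      exact Finset.sum_le_sum fun k _ => key j k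
    have h3 : ∑ j : Fin d, ∑ k : Fin d, ∑ i, ∫ ω, (X i ω j * X i ω k)^2 ∂μ
        = ∑ i, ∫ ω, (∑ j, (X i ω j)^2)^2 ∂μ := by
      calc ∑ j : Fin d, ∑ k : Fin d, ∑ i, ∫ ω, (X i ω j * X i ω k)^2 ∂μ
          = ∑ j : Fin d, ∑ i, ∑ k : Fin d, ∫ ω, (X i ω j * X i ω k)^2 ∂μ :=
            Finset.sum_congr rfl fun j _ => Finset.sum_comm
        _ = ∑ i, ∑ j : Fin d, ∑ k : Fin d, ∫ ω, (X i ω j * X i ω k)^2 ∂μ :=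
            Finset.sum_comm
        _ = ∑ i, ∫ ω, (∑ j, (X i ω j)^2)^2 ∂μ := by
            refine Finset.sum_congr rfl fun i _ => ?_
            calc ∑ j : Fin d, ∑ k : Fin d, ∫ ω, (X i ω j * X i ω k)^2 ∂μ
                = ∑ j : Fin d, ∫ ω, ∑ k : Fin d, (X i ω j * X i ω k)^2 ∂μ :=
                  Finset.sum_congr rfl fun j _ =>
                    (integral_finset_sum _ fun k _ => hY2int i j k).symm
              _ = ∫ ω, ∑ j : Fin d, ∑ k : Fin d, (X i ω j * X i ω k)^2 ∂μ :=
                  (integral_finset_sum _ fun j _ =>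
                    integrable_finset_sum _ fun k _ => hY2int i j k).symm
              _ = ∫ ω, (∑ j, (X i ω j)^2)^2 ∂μ :=
                  integral_congr_ae (Filter.Eventually.of_forall fun ω =>
                    (heqsq i ω).symm)
    have h4 : ∑ i, ∫ ω, (∑ j, (X i ω j)^2)^2 ∂μ ≤ β^2 * ((d:ℝ) * n) := by
      calc ∑ i, ∫ ω, (∑ j, (X i ω j)^2)^2 ∂μ
          ≤ ∑ i, β^2 * ∫ ω, ∑ j, (X i ω j)^2 ∂μ :=
            Finset.sum_le_sum fun i _ => hbound i
        _ = β^2 * ∑ i, ∫ ω, ∑ j, (X i ω j)^2 ∂μ := (Finset.mul_sum _ _ _).symm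
        _ = β^2 * ((d:ℝ) * n) := by rw [htrace]
    calc ∫ ω, f ω ∂μ
        ≤ ((n:ℝ)⁻¹)^2 * ∑ i, ∫ ω, (∑ j, (X i ω j)^2)^2 ∂μ := by
          rw [h1]; rw [← h3] at *; exact h2
      _ ≤ ((n:ℝ)⁻¹)^2 * (β^2 * ((d:ℝ) * n)) :=
          mul_le_mul_of_nonneg_left h4 (by positivity)
      _ = β^2 * ((d:ℝ)/n) := by field_simp
  -- conclude via concavity of sqrt (AM-GM trick)
  set C : ℝ := β^2 * ((d:ℝ)/n) with hCdef
  have hC : 0 < C := by positivity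
  have hsC : 0 < Real.sqrt C := Real.sqrt_pos.2 hC
  have hpt : ∀ ω, Real.sqrt (f ω) ≤ (f ω + C)/(2*Real.sqrt C) := by
    intro ω
    rw [le_div_iff₀ (by positivity)]
    calc Real.sqrt (f ω) * (2*Real.sqrt C)
        = 2 * Real.sqrt (f ω) * Real.sqrt C := by ring
      _ ≤ Real.sqrt (f ω)^2 + Real.sqrt C^2 := two_mul_le_add_sq _ _
      _ = f ω + C := by rw [Real.sq_sqrt (hf0 ω), Real.sq_sqrt hC.le]
  have hfinal : ∫ ω, Real.sqrt (f ω) ∂μ ≤ Real.sqrt C := by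
    calc ∫ ω, Real.sqrt (f ω) ∂μ
        ≤ ∫ ω, (f ω + C)/(2*Real.sqrt C) ∂μ :=
          integral_mono_of_nonneg (Filter.Eventually.of_forall fun ω => Real.sqrt_nonneg _)
            ((hfint.add (integrable_const C)).div_const _)
            (Filter.Eventually.of_forall hpt)
      _ = (∫ ω, f ω ∂μ + C)/(2*Real.sqrt C) := by
          rw [integral_div, integral_add hfint (integrable_const C), integral_const]
          simp
      _ ≤ (C + C)/(2*Real.sqrt C) := by
          apply div_le_div_of_nonneg_right ?_ (by positivity)
          · exact add_le_add_left hIf C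
      _ = Real.sqrt C := by
          rw [show C + C = 2 * C by ring, mul_div_mul_left _ _ (two_ne_zero),
            Real.div_sqrt]
  have hCrw : Real.sqrt C = β * Real.sqrt ((d:ℝ)/n) := by
    rw [hCdef, Real.sqrt_mul (sq_nonneg β), Real.sqrt_sq hβ.le]
  calc (∫ ω, Real.sqrt (∑ j : Fin d, ∑ k : Fin d,
        ((n : ℝ)⁻¹ * (∑ i, X i ω j * X i ω k) - (if j = k then 1 else 0)) ^ 2) ∂μ)
      = ∫ ω, Real.sqrt (f ω) ∂μ := rfl
    _ ≤ Real.sqrt C := hfinal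
    _ = β * Real.sqrt ((d:ℝ)/n) := hCrw
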